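/- Let n ≥ 3 and let κ be a real number with 1 < κ < 1 + 1/(n-2). Then some legal play from u_κ ends at a configuration all of whose coordinates are nonnegative, and every legal play from u_κ ending at a configuration with all coordinates nonnegative ends at the configuration v* given by v* ι0 = κ - (κ-1)(n-1) and v* x = κ - 1 for all x ≠ ι0 (that is, v* = (κ-1)·ρ^(ι0) + κ·e_{ι0}, where e_{ι0} is the indicator function of ι0). -/

import Mathlib

/-- The affine Cartan matrix of type `Ã_{n-1}`, indexed by `ZMod n`. -/
def A (n : ℕ) (i j : ZMod n) : ℤ :=
  if i = j then 2 else if j = i + 1 ∨ j = i - 1 then -1 else 0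

/-- Firing vertex `i` in type `Ã_{n-1}`. -/
def fire (n : ℕ) (i : ZMod n) (v : ZMod n → ℝ) : ZMod n → ℝ :=
  fun j => v j - (A n i j : ℝ) * v i

/-- The configuration resulting from firing the vertices in the list `l` successively. -/
def playResult (n : ℕ) : (ZMod n → ℝ) → List (ZMod n) → (ZMod n → ℝ)
  | v, [] => v
  | v, i :: l => playResult n (fire n i v) l

/-- `IsPlay n θ v l` : the list `l` is a sequence of successive firings starting at `v`
in which each fired vertex has amplitude strictly less than `θ` at the time it is fired.
With `θ = 0` this is a legal play; with `θ = -1` a `(<-1)`-play. -/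
def IsPlay (n : ℕ) (θ : ℝ) : (ZMod n → ℝ) → List (ZMod n) → Prop
  | _, [] => True
  | v, i :: l => v i < θ ∧ IsPlay n θ (fire n i v) l

/-- The configuration `ρ^(a)` : value `-(n-1)` at `a` and `1` elsewhere. -/
def rho (n : ℕ) (a : ZMod n) : ZMod n → ℝ :=
  fun j => if j = a then 1 - (n : ℝ) else 1

/-- The extending vertex `ι0`: the class of `n/2` if `n` is even, and `0` if `n` is odd. -/
def iota0 (n : ℕ) : ZMod n :=
  if Even n then ((n / 2 : ℕ) : ZMod n) else 0

/-- The configuration `u_κ = ρ^(0) + κ·e_0`. -/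
def ukappa (n : ℕ) (κ : ℝ) : ZMod n → ℝ :=
  fun j => if j = 0 then κ - ((n : ℝ) - 1) else 1

namespace NG

noncomputable def bb (n : ℕ) (v : ZMod n → ℝ) (k : ℕ) : ℝ :=
  -(∑ i ∈ Finset.range k, v (i : ZMod n))

noncomputable def EE (n : ℕ) (κ : ℝ) (q : ℤ) : ℝ :=
  ((q % (n : ℤ) : ℤ) : ℝ) - ((q % (n : ℤ) + q / (n : ℤ) : ℤ) : ℝ) * κ

def swp (p : ℕ) (k : ℕ) : ℕ := if k = p then p + 1 else if k = p + 1 then p else k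

def tau (n p : ℕ) (k : ℤ) : ℤ :=
  if k % (n : ℤ) = (p : ℤ) then k + 1
  else if k % (n : ℤ) = ((p : ℤ) + 1) % (n : ℤ) then k - 1 else k

def hh (n : ℕ) (a b : ℤ) : ℕ :=
  ((a - b + ((n : ℤ) - 1)) / (n : ℤ)).toNat + ((b - a - 1) / (n : ℤ)).toNat

def mu (n : ℕ) (g : ℤ → ℤ) : ℕ :=
  ∑ x ∈ Finset.range n ×ˢ Finset.range n,
    if x.1 < x.2 then hh n (g x.1) (g x.2) else 0

def g0 (n : ℕ) (p : ℤ) : ℤ :=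
  if p % (n : ℤ) = 0 then p
  else (p % n + p / n + 1 - n) * n + ((n : ℤ) - p % n)

def phi0 (n : ℕ) (s : ℤ) : ℤ :=
  if s % (n : ℤ) = 0 then s else (s % n + s / n) * n - s % n

def Inv (n : ℕ) (κ : ℝ) (v : ZMod n → ℝ) (g : ℤ → ℤ) : Prop :=
  Function.Bijective g ∧ (∀ k, g (k + n) = g k + n) ∧
    (2 * ∑ k ∈ Finset.range n, (g k - (k : ℤ)) = -((n : ℤ) * ((n : ℤ) - 1) * ((n : ℤ) - 2))) ∧
    ∀ k < n, bb n v k = EE n κ (g k) - EE n κ (g 0)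

section IntLemmas

variable {n : ℕ}

lemma emod_mul_add (hn : 0 < n) {a r : ℤ} (hr : 0 ≤ r) (hrn : r < n) :
    (a * n + r) % n = r := by
  rw [add_comm, mul_comm, Int.add_mul_emod_self_left, Int.emod_eq_of_lt hr hrn]

lemma ediv_mul_add (hn : 0 < n) {a r : ℤ} (hr : 0 ≤ r) (hrn : r < n) :
    (a * n + r) / n = a := by
  have hn0 : (n : ℤ) ≠ 0 := by omega
  rw [add_comm, mul_comm, Int.add_mul_ediv_left _ _ hn0, Int.ediv_eq_zero_of_lt hr hrn,
    zero_add]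

lemma EE_eval (hn : 0 < n) (κ : ℝ) {a r : ℤ} (hr : 0 ≤ r) (hrn : r < n) :
    EE n κ (a * n + r) = (r : ℝ) - ((r + a : ℤ) : ℝ) * κ := by
  unfold EE
  rw [emod_mul_add hn hr hrn, ediv_mul_add hn hr hrn, add_comm r a]

lemma emod_bounds (hn : 0 < n) (q : ℤ) : 0 ≤ q % n ∧ q % n < n := by
  have hn0 : (n : ℤ) ≠ 0 := by omega
  exact ⟨Int.emod_nonneg q hn0, Int.emod_lt_of_pos q (by omega)⟩

lemma q_decomp (q : ℤ) : q = (q / n) * n + q % n := by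
  rw [mul_comm]; exact (Int.mul_ediv_add_emod q n).symm

lemma EE_shift (hn : 0 < n) (κ : ℝ) (q : ℤ) : EE n κ (q + n) = EE n κ q - κ := by
  obtain ⟨h1, h2⟩ := emod_bounds hn q
  have hq := q_decomp (n := n) q
  have e1 : EE n κ q = ((q % n : ℤ) : ℝ) - ((q % n + q / n : ℤ) : ℝ) * κ := by
    conv_lhs => rw [hq]
    rw [EE_eval hn κ h1 h2]
  have e2 : EE n κ (q + n) = ((q % n : ℤ) : ℝ) - ((q % n + (q / n + 1) : ℤ) : ℝ) * κ := by
    have h3 : q + n = (q / n + 1) * n + q % n := by rw [add_one_mul]; omega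
    rw [h3, EE_eval hn κ h1 h2]
  rw [e1, e2]; push_cast; ring

lemma EE_drop (hn : 0 < n) (κ : ℝ) (q : ℤ) :
    EE n κ q - EE n κ (q + 1) =
      if (q + 1) % n = 0 then ((n : ℝ) - 1) - ((n : ℝ) - 2) * κ else κ - 1 := by
  obtain ⟨h1, h2⟩ := emod_bounds hn q
  have hq := q_decomp (n := n) q
  by_cases hc : q % n = (n : ℤ) - 1
  · have hq1 : q + 1 = (q / n + 1) * n + 0 := by rw [add_one_mul]; omega
    have hmod : (q + 1) % n = 0 := by
      rw [hq1, emod_mul_add hn le_rfl (by exact_mod_cast hn)]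
    rw [hmod, if_pos rfl]
    have e1 : EE n κ q = (((n : ℤ) - 1 : ℤ) : ℝ) - (((n : ℤ) - 1 + q / n : ℤ) : ℝ) * κ := by
      conv_lhs => rw [hq, hc]
      rw [show ((q / ↑n) * ↑n + (↑n - 1) : ℤ) = (q / ↑n) * ↑n + ((n : ℤ) - 1) from rfl,
        EE_eval hn κ (by omega) (by omega)]
    have e2 : EE n κ (q + 1) = ((0 : ℤ) : ℝ) - ((0 + (q / n + 1) : ℤ) : ℝ) * κ := by
      rw [hq1, EE_eval hn κ le_rfl (by exact_mod_cast hn)]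
    rw [e1, e2]; push_cast; ring
  · have hq1 : q + 1 = (q / n) * n + (q % n + 1) := by omega
    have hmod : (q + 1) % n = q % n + 1 := by
      rw [hq1, emod_mul_add hn (by omega) (by omega)]
    rw [hmod, if_neg (by omega)]
    have e1 : EE n κ q = ((q % n : ℤ) : ℝ) - ((q % n + q / n : ℤ) : ℝ) * κ := by
      conv_lhs => rw [hq]
      rw [EE_eval hn κ h1 h2]
    have e2 : EE n κ (q + 1) = ((q % n + 1 : ℤ) : ℝ) - ((q % n + 1 + q / n : ℤ) : ℝ) * κ := by
      rw [hq1, EE_eval hn κ (by omega) (by omega)]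
    rw [e1, e2]; push_cast; ring

lemma EE_succ_lt (hn : 0 < n) (κ : ℝ) (hκ1 : 1 < κ)
    (hbig : 0 < ((n : ℝ) - 1) - ((n : ℝ) - 2) * κ) (q : ℤ) :
    EE n κ (q + 1) < EE n κ q := by
  have := EE_drop hn κ q
  split_ifs at this <;> linarith

lemma EE_strictAnti (hn : 0 < n) (κ : ℝ) (hκ1 : 1 < κ)
    (hbig : 0 < ((n : ℝ) - 1) - ((n : ℝ) - 2) * κ) :
    StrictAnti (EE n κ) :=
  strictAnti_int_of_succ_lt (EE_succ_lt hn κ hκ1 hbig)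

lemma EE_lt_rev (hn : 0 < n) (κ : ℝ) (hκ1 : 1 < κ)
    (hbig : 0 < ((n : ℝ) - 1) - ((n : ℝ) - 2) * κ)
    {a b : ℤ} (h : EE n κ a < EE n κ b) : b < a := by
  by_contra hab
  push_neg at hab
  rcases lt_or_eq_of_le hab with h1 | h1
  · exact absurd (EE_strictAnti hn κ hκ1 hbig h1) (by linarith)
  · rw [h1] at h; linarith

lemma EE_le_rev (hn : 0 < n) (κ : ℝ) (hκ1 : 1 < κ)
    (hbig : 0 < ((n : ℝ) - 1) - ((n : ℝ) - 2) * κ)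
    {a b : ℤ} (h : EE n κ b ≤ EE n κ a) : a ≤ b := by
  by_contra hab
  push_neg at hab
  have := EE_strictAnti hn κ hκ1 hbig hab
  linarith

end IntLemmas

section HLemmas

variable {n : ℕ}

lemma toNat_ediv_neg (hn : 0 < n) {a : ℤ} (ha : a ≤ 0) : (a / (n : ℤ)).toNat = 0 := by
  have h2 : a / (n : ℤ) ≤ 0 / (n : ℤ) := Int.ediv_le_ediv (by omega) ha
  simp only [Int.zero_ediv] at h2
  omega

lemma toNat_ediv_zero (hn : 0 < n) {x : ℤ} (hx : x < n) : (x / (n : ℤ)).toNat = 0 := by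
  rcases le_or_gt x 0 with h | h
  · exact toNat_ediv_neg hn h
  · rw [Int.ediv_eq_zero_of_lt (by omega) hx]; rfl

lemma ediv_succ_shift (hn : 0 < n) {d : ℤ} (hd : 1 ≤ d) :
    (d + (n : ℤ) - 1) / n = (d - 1) / n + 1 := by
  have h0 : d + (n : ℤ) - 1 = (d - 1) + 1 * n := by ring
  rw [h0, Int.add_mul_ediv_right _ _ (by omega : (n : ℤ) ≠ 0)]

lemma hh1 (hn : 0 < n) {a b : ℤ} (hab : b < a) : hh n a b = hh n b a + 1 := by
  unfold hh
  have hd1 : 1 ≤ a - b := by omega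
  have e1 : (a - b + ((n : ℤ) - 1)) / n = (a - b - 1) / n + 1 := by
    rw [show a - b + ((n:ℤ) - 1) = (a - b) + (n : ℤ) - 1 by ring]
    exact ediv_succ_shift hn hd1
  have e2 : ((b - a - 1) / (n : ℤ)).toNat = 0 := toNat_ediv_neg hn (by omega)
  have e3 : ((b - a + ((n : ℤ) - 1)) / (n : ℤ)).toNat = 0 := toNat_ediv_zero hn (by omega)
  have h5 : 0 ≤ (a - b - 1) / (n : ℤ) := Int.ediv_nonneg (by omega) (by omega)
  rw [e1, e2, e3]
  omega

lemma hh2 (a c : ℤ) : hh n (a - n) c = hh n c a := by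
  unfold hh
  rw [show a - n - c + ((n : ℤ) - 1) = a - c - 1 by ring,
    show c - (a - n) - 1 = c - a + ((n : ℤ) - 1) by ring,
    show c - a + ((n : ℤ) - 1) = c - a + ((n : ℤ) - 1) by ring]
  exact add_comm _ _

lemma hh2' (hn : 0 < n) (a c : ℤ) : hh n c (a + n) = hh n a c := by
  unfold hh
  rw [show c - (a + n) + ((n : ℤ) - 1) = c - a - 1 by ring,
    show a + n - c - 1 = (a - c - 1) + 1 * n by ring,
    Int.add_mul_ediv_right _ _ (by omega : (n : ℤ) ≠ 0),
    show a - c + ((n : ℤ) - 1) = (a - c - 1) + 1 * n by ring,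
    Int.add_mul_ediv_right _ _ (by omega : (n : ℤ) ≠ 0)]
  exact add_comm _ _

lemma hh3 (hn : 0 < n) {a c : ℤ} (h : c + n < a) : hh n (a - n) (c + n) + 1 = hh n c a := by
  unfold hh
  have hd1 : 1 ≤ a - c - n := by omega
  have e1 : (a - n - (c + n) + ((n : ℤ) - 1)) / n = (a - c - n - 1) / n := by
    rw [show a - n - (c + n) + ((n : ℤ) - 1) = a - c - n - 1 by ring]
  have e2 : ((c + n - (a - n) - 1) / (n : ℤ)).toNat = 0 := toNat_ediv_zero hn (by omega)
  have e3 : ((c - a + ((n : ℤ) - 1)) / (n : ℤ)).toNat = 0 := toNat_ediv_neg hn (by omega)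
  have e4 : (a - c - 1) / (n : ℤ) = (a - c - n - 1) / n + 1 := by
    rw [show a - c - 1 = (a - c - n - 1) + 1 * n by ring,
      Int.add_mul_ediv_right _ _ (by omega : (n : ℤ) ≠ 0)]
  have h5 : 0 ≤ (a - c - n - 1) / (n : ℤ) := Int.ediv_nonneg (by omega) (by omega)
  rw [e1, e2, e3, e4]
  omega

end HLemmas

section TauLemmas

variable {n : ℕ}

lemma emod_add_one (hn : 0 < n) (k : ℤ) :
    (k + 1) % n = if k % n = (n : ℤ) - 1 then 0 else k % n + 1 := by
  obtain ⟨h1, h2⟩ := emod_bounds hn k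
  have hq := q_decomp (n := n) k
  by_cases hc : k % n = (n : ℤ) - 1
  · rw [if_pos hc]
    rw [show k + 1 = (k / n + 1) * n + 0 by rw [add_one_mul]; omega,
      emod_mul_add hn le_rfl (by omega)]
  · rw [if_neg hc]
    rw [show k + 1 = (k / n) * n + (k % n + 1) by omega,
      emod_mul_add hn (by omega) (by omega)]

lemma emod_sub_one (hn : 0 < n) (k : ℤ) :
    (k - 1) % n = if k % n = 0 then (n : ℤ) - 1 else k % n - 1 := by
  obtain ⟨h1, h2⟩ := emod_bounds hn k
  have hq := q_decomp (n := n) k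
  by_cases hc : k % n = 0
  · rw [if_pos hc]
    rw [show k - 1 = (k / n - 1) * n + ((n : ℤ) - 1) by rw [sub_one_mul]; omega,
      emod_mul_add hn (by omega) (by omega)]
  · rw [if_neg hc]
    rw [show k - 1 = (k / n) * n + (k % n - 1) by omega,
      emod_mul_add hn (by omega) (by omega)]

lemma pp1_mod (hn : 0 < n) {p : ℕ} (hp : p < n) :
    ((p : ℤ) + 1) % n = if p + 1 = n then 0 else (p : ℤ) + 1 := by
  by_cases hc : p + 1 = n
  · rw [if_pos hc, show ((p : ℤ) + 1) = 1 * n + 0 by omega, emod_mul_add hn le_rfl (by omega)]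
  · rw [if_neg hc, Int.emod_eq_of_lt (by omega) (by omega)]

lemma tau_invol (hn : 2 ≤ n) {p : ℕ} (hp : p < n) (k : ℤ) : tau n p (tau n p k) = k := by
  have hn0 : 0 < n := by omega
  obtain ⟨h1, h2⟩ := emod_bounds hn0 k
  have hpp := pp1_mod hn0 hp
  unfold tau
  by_cases hc : k % n = (p : ℤ)
  · rw [if_pos hc]
    have e1 : (k + 1) % n = ((p : ℤ) + 1) % n := by
      rw [emod_add_one hn0, hpp]
      split_ifs <;> omega
    have e2 : ¬((k + 1) % n = (p : ℤ)) := by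
      rw [e1, hpp]; split_ifs <;> omega
    rw [if_neg e2, if_pos e1]; ring
  · by_cases hc2 : k % n = ((p : ℤ) + 1) % n
    · rw [if_neg hc, if_pos hc2]
      have e1 : (k - 1) % n = (p : ℤ) := by
        rw [emod_sub_one hn0, hc2, hpp]
        split_ifs <;> omega
      rw [if_pos e1]; ring
    · rw [if_neg hc, if_neg hc2, if_neg hc, if_neg hc2]

lemma tau_equivar (hn : 0 < n) (p : ℕ) (k : ℤ) : tau n p (k + n) = tau n p k + n := by
  unfold tau
  have e : (k + n) % n = k % n := by
    rw [show k + (n : ℤ) = k + (n : ℤ) * 1 by ring, Int.add_mul_emod_self_left]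
  rw [e]
  split_ifs <;> ring

lemma tau_interior (hn : 0 < n) {p : ℕ} (hp : p + 1 < n) {j : ℕ} (hj : j < n) :
    tau n p (j : ℤ) = ((swp p j : ℕ) : ℤ) := by
  unfold tau swp
  have e0 : ((j : ℤ)) % n = (j : ℤ) := Int.emod_eq_of_lt (by omega) (by omega)
  have hpp : ((p : ℤ) + 1) % n = (p : ℤ) + 1 := by
    rw [pp1_mod hn (by omega), if_neg (by omega)]
  rw [e0, hpp]
  split_ifs <;> push_cast <;> omega

lemma tau_boundary_hi (hn : 0 < n) :
    tau n (n - 1) ((n : ℤ) - 1) = (n : ℤ) := by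
  unfold tau
  have e0 : ((n : ℤ) - 1) % n = (n : ℤ) - 1 := Int.emod_eq_of_lt (by omega) (by omega)
  rw [e0, if_pos (by push_cast; omega)]
  ring

lemma tau_boundary_lo (hn : 2 ≤ n) : tau n (n - 1) 0 = -1 := by
  have hn0 : 0 < n := by omega
  unfold tau
  have e0 : (0 : ℤ) % n = 0 := by simp
  have hpp : (((n - 1 : ℕ) : ℤ) + 1) % n = 0 := by
    rw [pp1_mod hn0 (by omega), if_pos (by omega)]
  rw [e0, if_neg (by push_cast; omega), if_pos hpp.symm]
  ring

lemma tau_boundary_mid (hn : 2 ≤ n) {j : ℕ} (hj0 : 0 < j) (hj : j < n - 1) :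
    tau n (n - 1) (j : ℤ) = (j : ℤ) := by
  have hn0 : 0 < n := by omega
  unfold tau
  have e0 : ((j : ℤ)) % n = (j : ℤ) := Int.emod_eq_of_lt (by omega) (by omega)
  have hpp : (((n - 1 : ℕ) : ℤ) + 1) % n = 0 := by
    rw [pp1_mod hn0 (by omega), if_pos (by omega)]
  rw [e0, if_neg (by push_cast; omega), if_neg (by rw [hpp]; omega)]

end TauLemmas

section MuLemmas

variable {n : ℕ}

lemma swp_invol (p k : ℕ) : swp p (swp p k) = k := by
  unfold swp; split_ifs <;> omega

lemma swp_lt (p : ℕ) {x1 x2 : ℕ} (h1 : ¬(x1 = p ∧ x2 = p + 1)) (h2 : ¬(x1 = p + 1 ∧ x2 = p)) :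
    (swp p x1 < swp p x2 ↔ x1 < x2) := by
  unfold swp; split_ifs <;> omega

def epair (p : ℕ) (x : ℕ × ℕ) : ℕ × ℕ :=
  if x = (p, p + 1) ∨ x = (p + 1, p) then x else (swp p x.1, swp p x.2)

lemma epair_invol (p : ℕ) (x : ℕ × ℕ) : epair p (epair p x) = x := by
  unfold epair
  by_cases h : x = (p, p + 1) ∨ x = (p + 1, p)
  · rw [if_pos h, if_pos h]
  · rw [if_neg h]
    have h2 : ¬((swp p x.1, swp p x.2) = (p, p + 1) ∨ (swp p x.1, swp p x.2) = (p + 1, p)) := by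
      unfold swp
      rcases x with ⟨a, b⟩
      simp only [Prod.mk.injEq, not_or, not_and] at h ⊢
      constructor <;> intro hh1 <;> split_ifs at hh1 ⊢ <;> omega
    rw [if_neg h2, swp_invol, swp_invol]

lemma epair_mem (hn : 0 < n) {p : ℕ} (hp : p + 1 < n) {x : ℕ × ℕ}
    (hx : x ∈ Finset.range n ×ˢ Finset.range n) :
    epair p x ∈ Finset.range n ×ˢ Finset.range n := by
  simp only [Finset.mem_product, Finset.mem_range] at hx ⊢
  unfold epair swp
  split_ifs <;> simp_all <;> omega

lemma mu_interior (hn : 3 ≤ n) {p : ℕ} (hp : p + 1 < n) (g : ℤ → ℤ)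
    (hdesc : g ((p : ℤ) + 1) < g (p : ℤ)) :
    mu n (fun k => g (tau n p k)) + 1 = mu n g := by
  classical
  have hn0 : 0 < n := by omega
  unfold mu
  have hmemP : ((p, p + 1) : ℕ × ℕ) ∈ Finset.range n ×ˢ Finset.range n := by
    simp only [Finset.mem_product, Finset.mem_range]; omega
  have key : ∀ x ∈ Finset.range n ×ˢ Finset.range n,
      ((if x.1 < x.2 then hh n (g (tau n p x.1)) (g (tau n p x.2)) else 0)
        + if x = (p, p + 1) then 1 else 0)
      = (if (epair p x).1 < (epair p x).2 then hh n (g ((epair p x).1 : ℤ)) (g ((epair p x).2 : ℤ)) else 0) := by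
    rintro ⟨a, b⟩ hx
    simp only [Finset.mem_product, Finset.mem_range] at hx
    obtain ⟨ha, hb⟩ := hx
    by_cases h1 : ((a, b) : ℕ × ℕ) = (p, p + 1)
    · have hab : a = p ∧ b = p + 1 := by simpa [Prod.mk.injEq] using h1
      obtain ⟨ha', hb'⟩ := hab
      subst ha' hb'
      have he : epair a (a, a + 1) = (a, a + 1) := by
        unfold epair; rw [if_pos (Or.inl rfl)]
      rw [he]
      dsimp only
      rw [if_pos (by omega : a < a + 1), if_pos (by omega : a < a + 1), if_pos rfl]
      rw [tau_interior hn0 hp ha, tau_interior hn0 hp hb]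
      have s1 : swp a a = a + 1 := by unfold swp; simp
      have s2 : swp a (a + 1) = a := by unfold swp; rw [if_neg (by omega), if_pos rfl]
      rw [s1, s2]
      have hc : (((a + 1 : ℕ)) : ℤ) = (a : ℤ) + 1 := by push_cast; ring
      rw [hc, hh1 hn0 hdesc]
    · by_cases h2 : ((a, b) : ℕ × ℕ) = (p + 1, p)
      · have hab : a = p + 1 ∧ b = p := by simpa [Prod.mk.injEq] using h2
        obtain ⟨ha', hb'⟩ := hab
        subst ha' hb'
        have he : epair b (b + 1, b) = (b + 1, b) := by
          unfold epair; rw [if_pos (Or.inr rfl)]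
        rw [he]
        dsimp only
        rw [if_neg (by omega : ¬(b + 1 < b)), if_neg (by omega : ¬(b + 1 < b)),
          if_neg (by simp only [Prod.mk.injEq]; omega)]
      · have he : epair p (a, b) = (swp p a, swp p b) := by
          unfold epair; rw [if_neg (not_or.mpr ⟨h1, h2⟩)]
        rw [he]
        dsimp only
        rw [tau_interior hn0 hp ha, tau_interior hn0 hp hb, if_neg h1]
        have h1' : ¬(a = p ∧ b = p + 1) := by
          intro hc; exact h1 (by simp [Prod.mk.injEq, hc.1, hc.2])
        have h2' : ¬(a = p + 1 ∧ b = p) := by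
          intro hc; exact h2 (by simp [Prod.mk.injEq, hc.1, hc.2])
        have hiff := swp_lt p h1' h2'
        by_cases hab : a < b
        · rw [if_pos hab, if_pos (hiff.mpr hab), add_zero]
        · rw [if_neg hab, if_neg (fun hc => hab (hiff.mp hc)), add_zero]
  have step1 : (∑ x ∈ Finset.range n ×ˢ Finset.range n,
        if x.1 < x.2 then hh n (g (tau n p x.1)) (g (tau n p x.2)) else 0) + 1
      = ∑ x ∈ Finset.range n ×ˢ Finset.range n,
        ((if x.1 < x.2 then hh n (g (tau n p x.1)) (g (tau n p x.2)) else 0)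
          + if x = (p, p + 1) then 1 else 0) := by
    rw [Finset.sum_add_distrib, Finset.sum_ite_eq' _ ((p, p+1) : ℕ × ℕ) (fun _ => 1),
      if_pos hmemP]
  rw [step1]
  exact Finset.sum_nbij' (epair p) (epair p)
    (fun x hx => epair_mem hn0 hp hx) (fun x hx => epair_mem hn0 hp hx)
    (fun x _ => epair_invol p x) (fun x _ => epair_invol p x) key

def bpair (n : ℕ) (x : ℕ × ℕ) : ℕ × ℕ :=
  if x.1 = 0 ∧ 0 < x.2 ∧ x.2 < n - 1 then (x.2, n - 1)
  else if x.2 = n - 1 ∧ 0 < x.1 ∧ x.1 < n - 1 then (0, x.1) else x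

lemma bpair_invol (hn : 3 ≤ n) (x : ℕ × ℕ) : bpair n (bpair n x) = x := by
  rcases x with ⟨a, b⟩
  unfold bpair
  by_cases h1 : a = 0 ∧ 0 < b ∧ b < n - 1
  · rw [if_pos h1]
    dsimp only
    rw [if_neg (by omega), if_pos (by refine ⟨rfl, h1.2.1, h1.2.2⟩)]
    simp [h1.1]
  · rw [if_neg h1]
    by_cases h2 : b = n - 1 ∧ 0 < a ∧ a < n - 1
    · rw [if_pos h2]
      dsimp only
      rw [if_pos (by exact ⟨rfl, h2.2.1, h2.2.2⟩)]
      simp [h2.1]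
    · rw [if_neg h2]
      dsimp only
      rw [if_neg h1, if_neg h2]

lemma bpair_mem (hn : 3 ≤ n) {x : ℕ × ℕ}
    (hx : x ∈ Finset.range n ×ˢ Finset.range n) :
    bpair n x ∈ Finset.range n ×ˢ Finset.range n := by
  rcases x with ⟨a, b⟩
  simp only [Finset.mem_product, Finset.mem_range] at hx ⊢
  unfold bpair
  split_ifs <;> dsimp only <;> omega

lemma mu_boundary (hn : 3 ≤ n) (g : ℤ → ℤ) (heq : ∀ k, g (k + n) = g k + n)
    (hdesc : g 0 + n < g ((n : ℤ) - 1)) :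
    mu n (fun k => g (tau n (n - 1) k)) + 1 = mu n g := by
  classical
  have hn0 : 0 < n := by omega
  have hgm1 : g (-1) = g ((n : ℤ) - 1) - n := by
    have := heq (-1)
    rw [show (-1 : ℤ) + n = (n : ℤ) - 1 by ring] at this
    omega
  have hgn : g (n : ℤ) = g 0 + n := by
    have := heq 0
    rwa [zero_add] at this
  have hcast1 : (((n - 1 : ℕ)) : ℤ) = (n : ℤ) - 1 := by push_cast [hn0]; ring
  unfold mu
  have hmemP : ((0, n - 1) : ℕ × ℕ) ∈ Finset.range n ×ˢ Finset.range n := by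
    simp only [Finset.mem_product, Finset.mem_range]; omega
  have key : ∀ x ∈ Finset.range n ×ˢ Finset.range n,
      ((if x.1 < x.2 then hh n (g (tau n (n - 1) x.1)) (g (tau n (n - 1) x.2)) else 0)
        + if x = (0, n - 1) then 1 else 0)
      = (if (bpair n x).1 < (bpair n x).2 then
          hh n (g ((bpair n x).1 : ℤ)) (g ((bpair n x).2 : ℤ)) else 0) := by
    rintro ⟨a, b⟩ hx
    simp only [Finset.mem_product, Finset.mem_range] at hx
    obtain ⟨ha, hb⟩ := hx
    by_cases h1 : a = 0 ∧ 0 < b ∧ b < n - 1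
    · obtain ⟨ha', hb1, hb2⟩ := h1
      subst ha'
      have he : bpair n (0, b) = (b, n - 1) := by
        unfold bpair; rw [if_pos (by exact ⟨rfl, hb1, hb2⟩)]
      rw [he]
      dsimp only
      rw [if_pos hb1, if_pos (by omega : b < n - 1), if_neg (by simp only [Prod.mk.injEq]; omega)]
      have t0 : tau n (n - 1) ((0 : ℕ) : ℤ) = -1 := by
        rw [show (((0 : ℕ)) : ℤ) = 0 by norm_num]; exact tau_boundary_lo (by omega)
      have tb : tau n (n - 1) (b : ℤ) = (b : ℤ) := tau_boundary_mid (by omega) hb1 hb2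
      rw [t0, tb, hgm1, add_zero, hcast1]
      exact hh2 _ _
    · by_cases h2 : b = n - 1 ∧ 0 < a ∧ a < n - 1
      · obtain ⟨hb', ha1, ha2⟩ := h2
        subst hb'
        have he : bpair n (a, n - 1) = (0, a) := by
          unfold bpair
          rw [if_neg (by omega), if_pos (by exact ⟨rfl, ha1, ha2⟩)]
        rw [he]
        dsimp only
        rw [if_pos (by omega : a < n - 1), if_pos ha1, if_neg (by simp only [Prod.mk.injEq]; omega)]
        have ta : tau n (n - 1) (a : ℤ) = (a : ℤ) := tau_boundary_mid (by omega) ha1 ha2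
        have tb : tau n (n - 1) (((n - 1 : ℕ)) : ℤ) = (n : ℤ) := by
          rw [hcast1]; exact tau_boundary_hi hn0
        rw [ta, tb, hgn, add_zero, hh2' hn0 (g 0) (g (a : ℤ))]
        norm_num
      · by_cases h3 : ((a, b) : ℕ × ℕ) = (0, n - 1)
        · have hab : a = 0 ∧ b = n - 1 := by simpa [Prod.mk.injEq] using h3
          obtain ⟨ha', hb'⟩ := hab
          subst ha' hb'
          have he : bpair n (0, n - 1) = (0, n - 1) := by
            unfold bpair
            rw [if_neg (by omega), if_neg (by omega)]
          rw [he]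
          dsimp only
          rw [if_pos (by omega : 0 < n - 1), if_pos (by omega : 0 < n - 1), if_pos rfl]
          have t0 : tau n (n - 1) (((0 : ℕ)) : ℤ) = -1 := by
            rw [show (((0 : ℕ)) : ℤ) = 0 by norm_num]; exact tau_boundary_lo (by omega)
          have tb : tau n (n - 1) (((n - 1 : ℕ)) : ℤ) = (n : ℤ) := by
            rw [hcast1]; exact tau_boundary_hi hn0
          rw [t0, tb, hgm1, hgn, hcast1]
          rw [show ((0 : ℕ) : ℤ) = 0 by norm_num]
          exact hh3 hn0 hdesc
        · -- remaining: bpair = id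
          have he : bpair n (a, b) = (a, b) := by
            unfold bpair
            rw [if_neg h1, if_neg h2]
          rw [he]
          dsimp only
          rw [if_neg h3]
          by_cases hab : a < b
          · -- then 1 ≤ a and b ≤ n - 2
            have ha1 : 0 < a := by
              rcases Nat.eq_zero_or_pos a with h | h
              · exfalso
                subst h
                have hbn : b = n - 1 := by omega
                exact h3 (by simp [hbn])
              · exact h
            have hb2 : b < n - 1 := by
              by_contra hc
              have hbn : b = n - 1 := by omega
              exact h2 ⟨hbn, ha1, by omega⟩
            have ta : tau n (n - 1) (a : ℤ) = (a : ℤ) := tau_boundary_mid (by omega) ha1 (by omega)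
            have tb : tau n (n - 1) (b : ℤ) = (b : ℤ) := tau_boundary_mid (by omega) (by omega) hb2
            rw [ta, tb, if_pos hab, add_zero]
          · rw [if_neg hab, if_neg hab, add_zero]
  have step1 : (∑ x ∈ Finset.range n ×ˢ Finset.range n,
        if x.1 < x.2 then hh n (g (tau n (n - 1) x.1)) (g (tau n (n - 1) x.2)) else 0) + 1
      = ∑ x ∈ Finset.range n ×ˢ Finset.range n,
        ((if x.1 < x.2 then hh n (g (tau n (n - 1) x.1)) (g (tau n (n - 1) x.2)) else 0)
          + if x = (0, n - 1) then 1 else 0) := by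
    rw [Finset.sum_add_distrib, Finset.sum_ite_eq' _ ((0, n - 1) : ℕ × ℕ) (fun _ => 1),
      if_pos hmemP]
  rw [step1]
  exact Finset.sum_nbij' (bpair n) (bpair n)
    (fun x hx => bpair_mem hn hx) (fun x hx => bpair_mem hn hx)
    (fun x _ => bpair_invol hn x) (fun x _ => bpair_invol hn x) key

end MuLemmas
section WindowFire

variable {n : ℕ}

lemma bb_zero (v : ZMod n → ℝ) : bb n v 0 = 0 := by
  unfold bb; simp

lemma bb_succ (v : ZMod n → ℝ) (k : ℕ) : bb n v (k + 1) = bb n v k - v (k : ZMod n) := by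
  unfold bb; rw [Finset.sum_range_succ]; ring

lemma sum_univ_zmod [NeZero n] (f : ZMod n → ℝ) :
    (∑ x : ZMod n, f x) = ∑ i ∈ Finset.range n, f (i : ZMod n) := by
  apply Finset.sum_nbij' (fun (x : ZMod n) => x.val) (fun (i : ℕ) => (i : ZMod n))
  · intro x _; exact Finset.mem_range.mpr (ZMod.val_lt x)
  · intro i _; exact Finset.mem_univ _
  · intro x _; exact ZMod.natCast_zmod_val x
  · intro i hi; exact ZMod.val_cast_of_lt (Finset.mem_range.mp hi)
  · intro x _; rw [ZMod.natCast_zmod_val]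

lemma cast_eq_iff [NeZero n] {p i : ℕ} (hp : p < n) (hi : i < n) :
    ((p : ZMod n) = (i : ZMod n)) ↔ i = p := by
  rw [ZMod.natCast_eq_natCast_iff', Nat.mod_eq_of_lt hp, Nat.mod_eq_of_lt hi]
  omega

lemma cast_succ_iff [NeZero n] {p i : ℕ} (hp : p < n) (hi : i < n) :
    ((i : ZMod n) = (p : ZMod n) + 1) ↔ (i = p + 1 ∨ (p = n - 1 ∧ i = 0)) := by
  rw [show ((p : ZMod n) + 1) = ((p + 1 : ℕ) : ZMod n) by push_cast; ring,
    ZMod.natCast_eq_natCast_iff', Nat.mod_eq_of_lt hi]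
  by_cases hc : p + 1 = n
  · rw [hc, Nat.mod_self]; omega
  · rw [Nat.mod_eq_of_lt (by omega)]; omega

lemma cast_pred_iff [NeZero n] {p i : ℕ} (hp : p < n) (hi : i < n) :
    ((i : ZMod n) = (p : ZMod n) - 1) ↔ (i + 1 = p ∨ (i = n - 1 ∧ p = 0)) := by
  rw [eq_sub_iff_add_eq, show ((i : ZMod n) + 1) = ((i + 1 : ℕ) : ZMod n) by push_cast; ring,
    ZMod.natCast_eq_natCast_iff', Nat.mod_eq_of_lt hp]
  by_cases hc : i + 1 = n
  · rw [hc, Nat.mod_self]; omega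
  · rw [Nat.mod_eq_of_lt (by omega)]; omega

lemma A_eval (hn : 3 ≤ n) {p i : ℕ} (hp : p < n) (hi : i < n) :
    ((A n (p : ZMod n) (i : ZMod n) : ℤ) : ℝ) =
      if i = p then 2
      else if (i = p + 1 ∨ (p = n - 1 ∧ i = 0)) ∨ (i + 1 = p ∨ (i = n - 1 ∧ p = 0)) then -1
      else 0 := by
  haveI : NeZero n := ⟨by omega⟩
  unfold A
  by_cases h1 : i = p
  · rw [if_pos ((cast_eq_iff hp hi).mpr h1), if_pos h1]; norm_num
  · rw [if_neg (fun hc => h1 ((cast_eq_iff hp hi).mp hc)), if_neg h1]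
    by_cases h2 : ((i : ZMod n) = (p : ZMod n) + 1 ∨ (i : ZMod n) = (p : ZMod n) - 1)
    · rw [if_pos h2, if_pos (by
        rcases h2 with h2 | h2
        · exact Or.inl ((cast_succ_iff hp hi).mp h2)
        · exact Or.inr ((cast_pred_iff hp hi).mp h2))]
      norm_num
    · rw [if_neg h2, if_neg (by
        intro hc
        apply h2
        rcases hc with hc | hc
        · exact Or.inl ((cast_succ_iff hp hi).mpr hc)
        · exact Or.inr ((cast_pred_iff hp hi).mpr hc))]
      norm_num

lemma sum_ind {M : Type*} [AddCommMonoid M] (c : M) (a k : ℕ) :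
    ∑ i ∈ Finset.range k, (if i = a then c else 0) = if a < k then c else 0 := by
  rw [Finset.sum_ite_eq' (Finset.range k) a (fun _ => c)]
  by_cases h : a < k
  · rw [if_pos (Finset.mem_range.mpr h), if_pos h]
  · rw [if_neg (fun hc => h (Finset.mem_range.mp hc)), if_neg h]

lemma bb_fire_expand (hn : 3 ≤ n) {p : ℕ} (v : ZMod n → ℝ) (k : ℕ) :
    bb n (fire n (p : ZMod n) v) k
      = bb n v k + (∑ i ∈ Finset.range k, ((A n (p : ZMod n) (i : ZMod n) : ℤ) : ℝ)) * v (p : ZMod n) := by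
  unfold bb fire
  rw [Finset.sum_sub_distrib, ← Finset.sum_mul]
  ring

lemma bb_fire_interior (hn : 3 ≤ n) {p : ℕ} (hp : p + 1 < n) (v : ZMod n → ℝ)
    {k : ℕ} (hk : k < n) :
    bb n (fire n (p : ZMod n) v) k = bb n v (swp p k) - bb n v (swp p 0) := by
  haveI : NeZero n := ⟨by omega⟩
  rw [bb_fire_expand hn v k]
  by_cases hp0 : p = 0
  · subst hp0
    have hterm : ∀ i ∈ Finset.range k, ((A n ((0:ℕ) : ZMod n) (i : ZMod n) : ℤ) : ℝ)
        = (if i = 0 then (2:ℝ) else 0) + (if i = 1 then (-1:ℝ) else 0) := by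
      intro i hi
      have hik : i < k := Finset.mem_range.mp hi
      have hi' : i < n := by omega
      rw [A_eval hn (by omega) hi']
      by_cases h0 : i = 0
      · rw [if_pos h0, if_pos h0, if_neg (by omega)]; norm_num
      · rw [if_neg h0, if_neg h0]
        by_cases h1 : i = 1
        · rw [if_pos (Or.inl (Or.inl (by omega))), if_pos h1]; norm_num
        · rw [if_neg (by omega), if_neg h1]; norm_num
    rw [Finset.sum_congr rfl hterm, Finset.sum_add_distrib, sum_ind, sum_ind]
    have hsw0 : swp 0 0 = 1 := by unfold swp; simp
    have hb1 : bb n v 1 = -(v ((0 : ℕ) : ZMod n)) := by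
      rw [show (1 : ℕ) = 0 + 1 from rfl, bb_succ, bb_zero]; ring
    rw [hsw0]
    rcases Nat.lt_or_ge k 1 with hk1 | hk1
    · have hkk : k = 0 := by omega
      subst hkk
      rw [if_neg (by omega), if_neg (by omega), bb_zero, hsw0, hb1]
      norm_num
    · rcases Nat.lt_or_ge k 2 with hk2 | hk2
      · have hkk : k = 1 := by omega
        subst hkk
        rw [if_pos (by omega), if_neg (by omega)]
        have hsw1 : swp 0 1 = 0 := by unfold swp; rw [if_neg (by omega), if_pos rfl]
        rw [hsw1, bb_zero, hb1]
        push_cast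
        ring
      · rw [if_pos (by omega), if_pos (by omega)]
        have hswk : swp 0 k = k := by unfold swp; rw [if_neg (by omega), if_neg (by omega)]
        rw [hswk, hb1]
        ring
  · have hterm : ∀ i ∈ Finset.range k, ((A n (p : ZMod n) (i : ZMod n) : ℤ) : ℝ)
        = (if i = p then (2:ℝ) else 0) + (if i = p + 1 then (-1:ℝ) else 0)
          + (if i = p - 1 then (-1:ℝ) else 0) := by
      intro i hi
      have hik : i < k := Finset.mem_range.mp hi
      have hi' : i < n := by omega
      rw [A_eval hn (by omega) hi']
      by_cases h0 : i = p
      · rw [if_pos h0, if_pos h0, if_neg (by omega), if_neg (by omega)]; norm_num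
      · rw [if_neg h0, if_neg h0]
        by_cases h1 : i = p + 1
        · rw [if_pos (Or.inl (Or.inl h1)), if_pos h1, if_neg (by omega)]; norm_num
        · rw [if_neg h1]
          by_cases h2 : i = p - 1
          · rw [if_pos (Or.inr (Or.inl (by omega))), if_pos h2]; norm_num
          · rw [if_neg (by omega), if_neg h2]; norm_num
    rw [Finset.sum_congr rfl hterm, Finset.sum_add_distrib, Finset.sum_add_distrib,
      sum_ind, sum_ind, sum_ind]
    have hsw0 : swp p 0 = 0 := by unfold swp; rw [if_neg (by omega), if_neg (by omega)]
    rw [hsw0, bb_zero]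
    rcases Nat.lt_or_ge k p with hc | hc
    · rw [if_neg (by omega), if_neg (by omega), if_neg (by omega)]
      have hswk : swp p k = k := by unfold swp; rw [if_neg (by omega), if_neg (by omega)]
      rw [hswk]
      ring
    · rcases Nat.eq_or_lt_of_le hc with hc2 | hc2
      · have hkp : k = p := hc2.symm
        subst hkp
        rw [if_neg (by omega), if_neg (by omega), if_pos (by omega)]
        have hswk : swp k k = k + 1 := by unfold swp; simp
        rw [hswk, bb_succ]
        ring
      · rcases Nat.eq_or_lt_of_le hc2 with hc3 | hc3
        · rw [← hc3]
          rw [if_pos (by omega), if_neg (by omega), if_pos (by omega)]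
          have hswk : swp p (p + 1) = p := by unfold swp; rw [if_neg (by omega), if_pos rfl]
          rw [hswk, bb_succ]
          ring
        · rw [if_pos (by omega), if_pos (by omega), if_pos (by omega)]
          have hswk : swp p k = k := by unfold swp; rw [if_neg (by omega), if_neg (by omega)]
          rw [hswk]
          ring

lemma vlast [NeZero n] (hn : 3 ≤ n) (v : ZMod n → ℝ) :
    v ((n - 1 : ℕ) : ZMod n) = (∑ x : ZMod n, v x) + bb n v (n - 1) := by
  have h1 : ∑ i ∈ Finset.range n, v (i : ZMod n) = ∑ x : ZMod n, v x :=
    (sum_univ_zmod v).symm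
  rw [show Finset.range n = Finset.range ((n - 1) + 1) by congr 1; omega,
    Finset.sum_range_succ] at h1
  unfold bb
  linarith [h1]

lemma bb_fire_boundary [NeZero n] (hn : 3 ≤ n) (v : ZMod n → ℝ) (κ : ℝ)
    (hS : ∑ x : ZMod n, v x = κ) {k : ℕ} (hk : k < n) :
    bb n (fire n ((n - 1 : ℕ) : ZMod n) v) k
      = (if k = 0 then bb n v (n - 1) + κ else if k = n - 1 then -κ else bb n v k)
        - (bb n v (n - 1) + κ) := by
  have hvlast : v ((n - 1 : ℕ) : ZMod n) = κ + bb n v (n - 1) := by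
    rw [vlast hn v, hS]
  rw [bb_fire_expand hn v k]
  have hterm : ∀ i ∈ Finset.range k, ((A n ((n - 1 : ℕ) : ZMod n) (i : ZMod n) : ℤ) : ℝ)
      = (if i = 0 then (-1:ℝ) else 0) + (if i = n - 2 then (-1:ℝ) else 0) := by
    intro i hi
    have hik : i < k := Finset.mem_range.mp hi
    have hi' : i < n := by omega
    rw [A_eval hn (by omega) hi']
    split_ifs <;> (first | (exfalso; omega) | norm_num)
  rw [Finset.sum_congr rfl hterm, Finset.sum_add_distrib, sum_ind, sum_ind]
  rcases Nat.eq_zero_or_pos k with hk0 | hk0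
  · subst hk0
    rw [if_neg (by omega), if_neg (by omega), if_pos rfl, bb_zero]
    ring
  · rcases Nat.lt_or_ge k (n - 1) with hk1 | hk1
    · rw [if_pos (by omega), if_neg (by omega), if_neg (by omega), if_neg (by omega), hvlast]
      ring
    · have : k = n - 1 := by omega
      subst this
      rw [if_pos (by omega), if_pos (by omega), if_neg (by omega), if_pos rfl, hvlast]
      ring

end WindowFire
section Preserve

variable {n : ℕ}

lemma sum_A_zero [NeZero n] (hn : 3 ≤ n) (i : ZMod n) :
    ∑ x : ZMod n, ((A n i x : ℤ) : ℝ) = 0 := by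
  haveI : Fact (1 < n) := ⟨by omega⟩
  have h1 : (1 : ZMod n) ≠ 0 := one_ne_zero
  have h2 : ((2 : ℕ) : ZMod n) ≠ 0 := by
    intro hc
    have hd := (ZMod.natCast_eq_zero_iff 2 n).mp hc
    have := Nat.le_of_dvd (by norm_num) hd
    omega
  have h2' : (2 : ZMod n) ≠ 0 := by exact_mod_cast h2
  have hne1 : i + 1 ≠ i := by
    intro hc
    exact h1 (by linear_combination hc)
  have hne2 : i - 1 ≠ i := by
    intro hc
    exact h1 (by linear_combination -hc)
  have hne3 : i + 1 ≠ i - 1 := by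
    intro hc
    exact h2' (by linear_combination hc)
  have key : ∀ x : ZMod n, ((A n i x : ℤ) : ℝ)
      = (if x = i then (2:ℝ) else 0) + (if x = i + 1 then (-1:ℝ) else 0)
        + (if x = i - 1 then (-1:ℝ) else 0) := by
    intro x
    unfold A
    by_cases e1 : x = i
    · subst e1
      rw [if_pos rfl, if_pos rfl, if_neg (fun hc => hne1 hc.symm), if_neg (fun hc => hne2 hc.symm)]
      norm_num
    · rw [if_neg (fun hc => e1 hc.symm), if_neg e1]
      by_cases e2 : x = i + 1
      · rw [if_pos (Or.inl e2), if_pos e2, if_neg (by rw [e2]; exact hne3)]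
        norm_num
      · rw [if_neg e2]
        by_cases e3 : x = i - 1
        · rw [if_pos (Or.inr e3), if_pos e3]; norm_num
        · rw [if_neg (by tauto), if_neg e3]; norm_num
  rw [Finset.sum_congr rfl (fun x _ => key x), Finset.sum_add_distrib, Finset.sum_add_distrib,
    Finset.sum_ite_eq' Finset.univ i (fun _ => (2:ℝ)),
    Finset.sum_ite_eq' Finset.univ (i + 1) (fun _ => (-1:ℝ)),
    Finset.sum_ite_eq' Finset.univ (i - 1) (fun _ => (-1:ℝ))]
  simp only [Finset.mem_univ, if_true]
  norm_num

lemma sum_fire [NeZero n] (hn : 3 ≤ n) (i : ZMod n) (v : ZMod n → ℝ) :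
    ∑ x : ZMod n, fire n i v x = ∑ x : ZMod n, v x := by
  unfold fire
  rw [Finset.sum_sub_distrib, ← Finset.sum_mul, sum_A_zero hn i, zero_mul, sub_zero]

lemma tau_bij (hn : 3 ≤ n) {p : ℕ} (hp : p < n) : Function.Bijective (tau n p) :=
  Function.bijective_iff_has_inverse.mpr
    ⟨tau n p, fun k => tau_invol (by omega) hp k, fun k => tau_invol (by omega) hp k⟩

/-- swap of 0 and n-1 on window -/
def swb (n : ℕ) (k : ℕ) : ℕ := if k = 0 then n - 1 else if k = n - 1 then 0 else k

lemma sum_g_tau (hn : 3 ≤ n) {p : ℕ} (hp : p < n) (g : ℤ → ℤ)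
    (heq : ∀ k, g (k + n) = g k + n) :
    ∑ k ∈ Finset.range n, g (tau n p (k : ℕ)) = ∑ k ∈ Finset.range n, g (k : ℕ) := by
  have hn0 : 0 < n := by omega
  rcases Nat.lt_or_ge (p + 1) n with hpi | hpb
  · -- interior
    have hterm : ∀ k ∈ Finset.range n, g (tau n p (k : ℕ)) = g ((swp p k : ℕ) : ℤ) := by
      intro k hk
      rw [tau_interior hn0 hpi (Finset.mem_range.mp hk)]
    rw [Finset.sum_congr rfl hterm]
    apply Finset.sum_nbij' (swp p) (swp p)
    · intro a ha
      simp only [Finset.mem_range] at ha ⊢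
      unfold swp; split_ifs <;> omega
    · intro a ha
      simp only [Finset.mem_range] at ha ⊢
      unfold swp; split_ifs <;> omega
    · intro a _; exact swp_invol p a
    · intro a _; exact swp_invol p a
    · intro a _; rfl
  · -- boundary
    have hpe : p = n - 1 := by omega
    subst hpe
    have hgm1 : g (-1) = g (((n - 1 : ℕ) : ℤ)) - n := by
      have h := heq (-1)
      rw [show (-1 : ℤ) + n = ((n - 1 : ℕ) : ℤ) by omega] at h
      omega
    have hgn : g ((n : ℕ) : ℤ) = g ((0 : ℕ) : ℤ) + n := by
      have h := heq 0
      rw [zero_add] at h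
      rw [show ((n : ℕ) : ℤ) = (n : ℤ) from rfl, h]
      norm_num
    have hterm : ∀ k ∈ Finset.range n, g (tau n (n - 1) (k : ℕ))
        = g ((swb n k : ℕ) : ℤ) + ((if k = 0 then -(n : ℤ) else 0) + (if k = n - 1 then (n : ℤ) else 0)) := by
      intro k hk
      have hkn : k < n := Finset.mem_range.mp hk
      by_cases hk0 : k = 0
      · subst hk0
        rw [show (((0:ℕ)) : ℤ) = 0 by norm_num, tau_boundary_lo (by omega), hgm1]
        unfold swb
        rw [if_pos rfl, if_pos rfl, if_neg (by omega)]
        ring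
      · by_cases hk1 : k = n - 1
        · subst hk1
          rw [show (((n - 1 :ℕ)) : ℤ) = (n:ℤ) - 1 by push_cast; omega, tau_boundary_hi hn0]
          unfold swb
          rw [if_neg (by omega), if_pos rfl, if_neg hk0, if_pos rfl]
          rw [show ((0:ℕ) : ℤ) = 0 by norm_num] at hgn
          rw [show ((n:ℕ) : ℤ) = (n : ℤ) from rfl] at hgn
          rw [hgn]
          ring
        · rw [tau_boundary_mid (by omega) (by omega) (by omega)]
          unfold swb
          rw [if_neg hk0, if_neg hk1, if_neg hk0, if_neg hk1]
          ring
    rw [Finset.sum_congr rfl hterm, Finset.sum_add_distrib, Finset.sum_add_distrib,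
      sum_ind, sum_ind, if_pos (by omega), if_pos (by omega)]
    have hre : ∑ k ∈ Finset.range n, g ((swb n k : ℕ) : ℤ) = ∑ k ∈ Finset.range n, g (k : ℕ) := by
      apply Finset.sum_nbij' (swb n) (swb n)
      · intro a ha
        simp only [Finset.mem_range] at ha ⊢
        unfold swb; split_ifs <;> omega
      · intro a ha
        simp only [Finset.mem_range] at ha ⊢
        unfold swb; split_ifs <;> omega
      · intro a _
        unfold swb; split_ifs <;> omega
      · intro a _
        unfold swb; split_ifs <;> omega
      · intro a _
        rfl
    rw [hre]
    ring

end Preserve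
section InvPreserve

variable {n : ℕ}

lemma Inv_fire [NeZero n] (hn : 3 ≤ n) (κ : ℝ) (v : ZMod n → ℝ) (g : ℤ → ℤ)
    (hS : ∑ x : ZMod n, v x = κ) (hInv : Inv n κ v g) (i : ZMod n) :
    Inv n κ (fire n i v) (fun k => g (tau n (ZMod.val i) k)) := by
  obtain ⟨hbij, heq, hdef, hwin⟩ := hInv
  have hn0 : 0 < n := by omega
  set p := ZMod.val i with hpdef
  have hpn : p < n := ZMod.val_lt i
  have hi : (p : ZMod n) = i := ZMod.natCast_zmod_val i
  refine ⟨hbij.comp (tau_bij hn hpn), ?_, ?_, ?_⟩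
  · intro k
    dsimp only
    rw [tau_equivar hn0 p k, heq]
  · have h1 : ∑ k ∈ Finset.range n, (g (tau n p (k : ℕ)) - (k : ℤ))
        = ∑ k ∈ Finset.range n, (g ((k : ℕ)) - (k : ℤ)) := by
      rw [Finset.sum_sub_distrib, Finset.sum_sub_distrib, sum_g_tau hn hpn g heq]
    rw [h1]
    exact hdef
  · intro k hk
    dsimp only
    rcases Nat.lt_or_ge (p + 1) n with hpi | hpb
    · -- interior
      have hswk : swp p k < n := by unfold swp; split_ifs <;> omega
      have hsw0 : swp p 0 < n := by unfold swp; split_ifs <;> omega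
      have ht0 : tau n p (0 : ℤ) = ((swp p 0 : ℕ) : ℤ) := by
        have h := tau_interior hn0 hpi (show (0:ℕ) < n by omega)
        simpa using h
      rw [← hi, bb_fire_interior hn hpi v hk, hwin _ hswk, hwin _ hsw0,
        tau_interior hn0 hpi hk, ht0]
      ring
    · -- boundary
      have hpe : p = n - 1 := by omega
      have hgm1 : g (-1) = g (((n - 1 : ℕ) : ℤ)) - n := by
        have h := heq (-1)
        rw [show (-1 : ℤ) + n = ((n - 1 : ℕ) : ℤ) by omega] at h
        omega
      have hEm1 : EE n κ (g (-1)) = EE n κ (g (((n - 1 : ℕ) : ℤ))) + κ := by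
        have := EE_shift hn0 κ (g (((n - 1 : ℕ) : ℤ)) - (n : ℤ))
        rw [show g (((n - 1 : ℕ) : ℤ)) - (n:ℤ) + (n:ℤ) = g (((n - 1 : ℕ) : ℤ)) by ring] at this
        rw [hgm1]
        linarith
      have hgn : g ((n : ℤ)) = g ((0 : ℤ)) + n := by
        have h := heq 0
        rwa [zero_add] at h
      have hEn : EE n κ (g ((n : ℤ))) = EE n κ (g (0 : ℤ)) - κ := by
        rw [hgn]
        exact EE_shift hn0 κ (g 0)
      have hβ : ∀ j, j < n →
          (if j = 0 then bb n v (n - 1) + κ else if j = n - 1 then -κ else bb n v j)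
            = EE n κ (g (tau n p (j : ℕ))) - EE n κ (g (0 : ℤ)) := by
        intro j hj
        by_cases hj0 : j = 0
        · subst hj0
          rw [if_pos rfl, show (((0:ℕ)) : ℤ) = 0 by norm_num, hpe,
            tau_boundary_lo (by omega), hEm1, hwin (n-1) (by omega)]
          push_cast
          ring
        · by_cases hj1 : j = n - 1
          · subst hj1
            rw [if_neg hj0, if_pos rfl, hpe,
              show (((n - 1 : ℕ)) : ℤ) = (n : ℤ) - 1 by omega, tau_boundary_hi hn0, hEn]
            ring
          · rw [if_neg hj0, if_neg hj1, hpe,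
              tau_boundary_mid (by omega) (by omega) (by omega), hwin j hj]
      have hb := bb_fire_boundary hn v κ hS (k := k) hk
      rw [show ((n - 1 : ℕ) : ZMod n) = (p : ZMod n) by rw [hpe], hi] at hb
      rw [hb, hβ k hk]
      have ht0 : tau n p (0 : ℤ) = -1 := by rw [hpe]; exact tau_boundary_lo (by omega)
      rw [ht0, hEm1, hwin (n - 1) (by omega)]
      ring

lemma descent_of_neg [NeZero n] (hn : 3 ≤ n) (κ : ℝ) (hκ1 : 1 < κ)
    (hbig : 0 < ((n : ℝ) - 1) - ((n : ℝ) - 2) * κ)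
    (v : ZMod n → ℝ) (g : ℤ → ℤ)
    (hS : ∑ x : ZMod n, v x = κ) (hInv : Inv n κ v g) {p : ℕ} (hpn : p < n)
    (hneg : v (p : ZMod n) < 0) : g ((p : ℤ) + 1) < g (p : ℤ) := by
  obtain ⟨hbij, heq, hdef, hwin⟩ := hInv
  have hn0 : 0 < n := by omega
  rcases Nat.lt_or_ge (p + 1) n with hpi | hpb
  · have h1 : bb n v (p + 1) = bb n v p - v (p : ZMod n) := bb_succ v p
    rw [hwin (p+1) hpi, hwin p (by omega)] at h1
    have h2 : EE n κ (g ((p : ℕ))) < EE n κ (g ((p + 1 : ℕ))) := by linarith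
    have h3 := EE_lt_rev hn0 κ hκ1 hbig h2
    rwa [show (((p + 1 : ℕ)) : ℤ) = (p : ℤ) + 1 by omega] at h3
  · have hpe : p = n - 1 := by omega
    have hv : v (p : ZMod n) = κ + bb n v (n - 1) := by
      rw [show (p : ZMod n) = ((n - 1 : ℕ) : ZMod n) by rw [hpe], vlast hn v, hS]
    rw [hv, hwin (n-1) (by omega)] at hneg
    have h2 : EE n κ (g (((n - 1 : ℕ)) : ℤ) - (n : ℤ)) < EE n κ (g (0 : ℤ)) := by
      have := EE_shift hn0 κ (g (((n - 1 : ℕ) : ℤ)) - (n : ℤ))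
      rw [show g (((n - 1 : ℕ) : ℤ)) - (n:ℤ) + (n:ℤ) = g (((n - 1 : ℕ) : ℤ)) by ring] at this
      linarith
    have h3 := EE_lt_rev hn0 κ hκ1 hbig h2
    have h4 := heq 0
    rw [zero_add] at h4
    rw [show (p : ℤ) + 1 = (n : ℤ) by omega, show (p : ℤ) = ((n - 1 : ℕ) : ℤ) by omega, h4]
    omega

lemma ascent_of_nonneg [NeZero n] (hn : 3 ≤ n) (κ : ℝ) (hκ1 : 1 < κ)
    (hbig : 0 < ((n : ℝ) - 1) - ((n : ℝ) - 2) * κ)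
    (v : ZMod n → ℝ) (g : ℤ → ℤ)
    (hS : ∑ x : ZMod n, v x = κ) (hInv : Inv n κ v g) {p : ℕ} (hpn : p < n)
    (hpos : 0 ≤ v (p : ZMod n)) : g ((p : ℤ)) ≤ g ((p : ℤ) + 1) := by
  obtain ⟨hbij, heq, hdef, hwin⟩ := hInv
  have hn0 : 0 < n := by omega
  rcases Nat.lt_or_ge (p + 1) n with hpi | hpb
  · have h1 : bb n v (p + 1) = bb n v p - v (p : ZMod n) := bb_succ v p
    rw [hwin (p+1) hpi, hwin p (by omega)] at h1
    have h2 : EE n κ (g ((p + 1 : ℕ))) ≤ EE n κ (g ((p : ℕ))) := by linarith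
    have h3 := EE_le_rev hn0 κ hκ1 hbig h2
    rwa [show (((p + 1 : ℕ)) : ℤ) = (p : ℤ) + 1 by omega] at h3
  · have hpe : p = n - 1 := by omega
    have hv : v (p : ZMod n) = κ + bb n v (n - 1) := by
      rw [show (p : ZMod n) = ((n - 1 : ℕ) : ZMod n) by rw [hpe], vlast hn v, hS]
    rw [hv, hwin (n-1) (by omega)] at hpos
    have h2 : EE n κ (g (0 : ℤ)) ≤ EE n κ (g (((n - 1 : ℕ)) : ℤ) - (n : ℤ)) := by
      have := EE_shift hn0 κ (g (((n - 1 : ℕ) : ℤ)) - (n : ℤ))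
      rw [show g (((n - 1 : ℕ) : ℤ)) - (n:ℤ) + (n:ℤ) = g (((n - 1 : ℕ) : ℤ)) by ring] at this
      linarith
    have h3 := EE_le_rev hn0 κ hκ1 hbig h2
    have h4 := heq 0
    rw [zero_add] at h4
    rw [show (p : ℤ) + 1 = (n : ℤ) by omega, show (p : ℤ) = ((n - 1 : ℕ) : ℤ) by omega, h4]
    omega

end InvPreserve
section MuFire

variable {n : ℕ}

lemma mu_fire_dec [NeZero n] (hn : 3 ≤ n) (κ : ℝ) (hκ1 : 1 < κ)
    (hbig : 0 < ((n : ℝ) - 1) - ((n : ℝ) - 2) * κ)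
    (v : ZMod n → ℝ) (g : ℤ → ℤ)
    (hS : ∑ x : ZMod n, v x = κ) (hInv : Inv n κ v g) (i : ZMod n)
    (hneg : v i < 0) :
    mu n (fun k => g (tau n (ZMod.val i) k)) + 1 = mu n g := by
  have hn0 : 0 < n := by omega
  set p := ZMod.val i with hpdef
  have hpn : p < n := ZMod.val_lt i
  have hi : (p : ZMod n) = i := ZMod.natCast_zmod_val i
  have hdesc : g ((p : ℤ) + 1) < g (p : ℤ) :=
    descent_of_neg hn κ hκ1 hbig v g hS hInv hpn (by rw [hi]; exact hneg)
  rcases Nat.lt_or_ge (p + 1) n with hpi | hpb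
  · exact mu_interior hn hpi g hdesc
  · have hpe : p = n - 1 := by omega
    have heq := hInv.2.1
    have h4 := heq 0
    rw [zero_add] at h4
    have hdesc' : g 0 + (n : ℤ) < g ((n : ℤ) - 1) := by
      rw [← h4, show ((n:ℤ) - 1) = ((p : ℤ)) by omega, show ((n:ℤ)) = (p : ℤ) + 1 by omega]
      exact hdesc
    rw [hpe]
    exact mu_boundary hn g heq hdesc'

end MuFire

section GZero

variable {n : ℕ}

lemma g0_at_zero : g0 n 0 = 0 := by
  unfold g0
  rw [if_pos (by simp)]

lemma EE_at_zero (κ : ℝ) : EE n κ 0 = 0 := by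
  unfold EE
  simp

lemma phi0_g0_inv (hn : 0 < n) (p : ℤ) : phi0 n (g0 n p) = p := by
  obtain ⟨hr0, hrn⟩ := emod_bounds hn p
  have hq := q_decomp (n := n) p
  unfold g0
  by_cases hr : p % n = 0
  · rw [if_pos hr]
    unfold phi0
    rw [if_pos hr]
  · rw [if_neg hr]
    have hV : (p % n + p / n + 1 - n) * n + ((n : ℤ) - p % n)
        = (p % n + p / n + 1 - n) * n + ((n : ℤ) - p % n) := rfl
    have hVm : ((p % n + p / n + 1 - n) * n + ((n : ℤ) - p % n)) % n = (n : ℤ) - p % n :=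
      emod_mul_add hn (by omega) (by omega)
    have hVd : ((p % n + p / n + 1 - n) * n + ((n : ℤ) - p % n)) / n = p % n + p / n + 1 - n :=
      ediv_mul_add hn (by omega) (by omega)
    unfold phi0
    rw [if_neg (by rw [hVm]; omega), hVm, hVd]
    linear_combination (-1 : ℤ) * hq

lemma g0_phi0_inv (hn : 0 < n) (s : ℤ) : g0 n (phi0 n s) = s := by
  obtain ⟨hr0, hrn⟩ := emod_bounds hn s
  have hq := q_decomp (n := n) s
  unfold phi0
  by_cases hr : s % n = 0
  · rw [if_pos hr]
    unfold g0
    rw [if_pos hr]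
  · rw [if_neg hr]
    have hW : (s % n + s / n) * n - s % n = (s % n + s / n - 1) * n + ((n:ℤ) - s % n) := by ring
    have hWm : ((s % n + s / n - 1) * n + ((n : ℤ) - s % n)) % n = (n : ℤ) - s % n :=
      emod_mul_add hn (by omega) (by omega)
    have hWd : ((s % n + s / n - 1) * n + ((n : ℤ) - s % n)) / n = s % n + s / n - 1 :=
      ediv_mul_add hn (by omega) (by omega)
    rw [hW]
    unfold g0
    rw [if_neg (by rw [hWm]; omega), hWm, hWd]
    linear_combination (-1 : ℤ) * hq

lemma g0_bij (hn : 0 < n) : Function.Bijective (g0 n) :=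
  Function.bijective_iff_has_inverse.mpr
    ⟨phi0 n, phi0_g0_inv hn, g0_phi0_inv hn⟩

lemma g0_equivar (hn : 0 < n) (p : ℤ) : g0 n (p + n) = g0 n p + n := by
  have he : (p + n) % n = p % n := by
    rw [show p + (n:ℤ) = p + (n:ℤ) * 1 by ring, Int.add_mul_emod_self_left]
  have hd : (p + n) / n = p / n + 1 := by
    rw [show p + (n:ℤ) = p + 1 * n by ring, Int.add_mul_ediv_right _ _ (by omega : (n:ℤ) ≠ 0)]
  unfold g0
  rw [he, hd]
  split_ifs with h
  · ring
  · ring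

lemma g0_val (hn : 0 < n) {k : ℕ} (hk1 : 1 ≤ k) (hkn : k < n) :
    g0 n (k : ℤ) = ((k : ℤ) + 1 - n) * n + ((n : ℤ) - k) := by
  unfold g0
  have he : (k : ℤ) % n = (k : ℤ) := Int.emod_eq_of_lt (by omega) (by omega)
  have hd : (k : ℤ) / n = 0 := Int.ediv_eq_zero_of_lt (by omega) (by omega)
  rw [if_neg (by omega), he, hd]
  ring

lemma g0_defect (hn : 3 ≤ n) :
    2 * ∑ k ∈ Finset.range n, (g0 n (k : ℕ) - (k : ℤ)) = -((n:ℤ) * ((n:ℤ) - 1) * ((n:ℤ) - 2)) := by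
  have hn0 : 0 < n := by omega
  have gauss : 2 * ∑ k ∈ Finset.range n, ((k : ℕ) : ℤ) = (n : ℤ) * ((n : ℤ) - 1) := by
    have h := Finset.sum_range_id_mul_two n
    have h2 := congrArg (Nat.cast : ℕ → ℤ) h
    push_cast [Nat.cast_sub (show 1 ≤ n by omega)] at h2
    linarith
  have hpt : ∀ k ∈ Finset.range n, g0 n (k : ℕ) - (k : ℤ)
      = (((n:ℤ) - 2) * (k : ℤ) + (2 * (n:ℤ) - (n:ℤ) * n)) + (if k = 0 then ((n:ℤ) * n - 2 * n) else 0) := by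
    intro k hk
    have hkn : k < n := Finset.mem_range.mp hk
    by_cases hk0 : k = 0
    · subst hk0
      rw [if_pos rfl]
      rw [show (((0:ℕ)) : ℤ) = 0 by norm_num, g0_at_zero]
      ring
    · rw [if_neg hk0, g0_val hn0 (by omega) hkn]
      ring
  rw [Finset.sum_congr rfl hpt, Finset.sum_add_distrib, Finset.sum_add_distrib, sum_ind,
    if_pos (by omega : 0 < n), Finset.sum_const, Finset.card_range, ← Finset.mul_sum]
  rw [nsmul_eq_mul]
  linear_combination ((n:ℤ) - 2) * gauss

lemma Inv_init [NeZero n] (hn : 3 ≤ n) (κ : ℝ) : Inv n κ (ukappa n κ) (g0 n) := by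
  have hn0 : 0 < n := by omega
  refine ⟨g0_bij hn0, g0_equivar hn0, g0_defect hn, ?_⟩
  intro k hk
  rw [g0_at_zero, EE_at_zero]
  by_cases hk0 : k = 0
  · subst hk0
    rw [show (((0:ℕ)) : ℤ) = 0 by norm_num, g0_at_zero, EE_at_zero, bb_zero]
    ring
  · have hterm : ∀ i ∈ Finset.range k, ukappa n κ (i : ZMod n)
        = 1 + (if i = 0 then κ - n else 0) := by
      intro i hi
      have hin : i < n := by have := Finset.mem_range.mp hi; omega
      unfold ukappa
      by_cases hi0 : i = 0
      · subst hi0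
        rw [if_pos rfl, if_pos (by norm_num)]
        push_cast
        ring
      · rw [if_neg hi0, if_neg (by
          intro hc
          have := (ZMod.natCast_eq_zero_iff i n).mp hc
          have := Nat.le_of_dvd (by omega) this
          omega)]
        ring
    unfold bb
    rw [Finset.sum_congr rfl hterm, Finset.sum_add_distrib, sum_ind,
      if_pos (by omega : 0 < k), Finset.sum_const, Finset.card_range, nsmul_eq_mul]
    have hg := g0_val hn0 (by omega : 1 ≤ k) hk
    rw [hg, EE_eval hn0 κ (r := (n:ℤ) - k) (by omega) (by omega)]
    push_cast
    ring

lemma sum_ukappa [NeZero n] (hn : 3 ≤ n) (κ : ℝ) : ∑ x : ZMod n, ukappa n κ x = κ := by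
  have hterm : ∀ x : ZMod n, ukappa n κ x = 1 + (if x = 0 then κ - n else 0) := by
    intro x
    unfold ukappa
    by_cases h : x = 0
    · rw [if_pos h, if_pos h]; ring
    · rw [if_neg h, if_neg h]; ring
  rw [Finset.sum_congr rfl (fun x _ => hterm x), Finset.sum_add_distrib,
    Finset.sum_ite_eq' Finset.univ (0 : ZMod n) (fun _ => κ - (n:ℝ)),
    if_pos (Finset.mem_univ _), Finset.sum_const, Finset.card_univ, ZMod.card, nsmul_eq_mul]
  ring

end GZero
section Final

variable {n : ℕ}

lemma mono_bij_translation (g : ℤ → ℤ) (hbij : Function.Bijective g)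
    (hmono : ∀ k, g k ≤ g (k + 1)) : ∀ k, g k = k + g 0 := by
  have hlt : ∀ k, g k < g (k + 1) := by
    intro k
    rcases lt_or_eq_of_le (hmono k) with h | h
    · exact h
    · exfalso
      have := hbij.1 h
      omega
  have hsm : StrictMono g := strictMono_int_of_lt_succ hlt
  have hsucc : ∀ k, g (k + 1) = g k + 1 := by
    intro k
    by_contra hc
    have h2 : g k + 2 ≤ g (k + 1) := by have := hlt k; omega
    obtain ⟨m, hm⟩ := hbij.2 (g k + 1)
    rcases le_or_gt m k with h | h
    · have := hsm.le_iff_le.mpr h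
      omega
    · have h' : k + 1 ≤ m := h
      have := hsm.le_iff_le.mpr h'
      omega
  intro k
  induction k using Int.induction_on with
  | zero => omega
  | succ j ih =>
    have := hsucc (j : ℤ)
    omega
  | pred j ih =>
    have h := hsucc (-(j : ℤ) - 1)
    rw [show -(j:ℤ) - 1 + 1 = -(j:ℤ) by ring] at h
    omega

lemma equivar_mul (hn : 0 < n) (g : ℤ → ℤ) (heq : ∀ k, g (k + n) = g k + n) :
    ∀ (q : ℤ) (k : ℤ), g (k + q * n) = g k + q * n := by
  intro q
  induction q using Int.induction_on with
  | zero => simp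
  | succ j ih =>
    intro k
    rw [show k + ((j:ℤ) + 1) * n = (k + (j:ℤ) * n) + n by ring, heq, ih k]
    ring
  | pred j ih =>
    intro k
    have h := heq (k + (-(j:ℤ) - 1) * n)
    rw [show k + (-(j:ℤ) - 1) * n + n = k + (-(j:ℤ)) * n by ring, ih k] at h
    linear_combination (-1 : ℤ) * h

lemma mono_all (hn : 0 < n) (g : ℤ → ℤ) (heq : ∀ k, g (k + n) = g k + n)
    (hwm : ∀ p : ℕ, p < n → g (p : ℤ) ≤ g ((p : ℤ) + 1)) : ∀ k, g k ≤ g (k + 1) := by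
  intro k
  obtain ⟨hr0, hrn⟩ := emod_bounds hn k
  set p : ℕ := (k % n).toNat with hpdef
  have hp : (p : ℤ) = k % n := Int.toNat_of_nonneg hr0
  have hk : k = (p : ℤ) + (k / n) * n := by
    have := q_decomp (n := n) k
    omega
  have h1 : g k = g (p : ℤ) + (k / n) * n := by
    conv_lhs => rw [hk]
    exact equivar_mul hn g heq _ _
  have h2 : g (k + 1) = g ((p : ℤ) + 1) + (k / n) * n := by
    rw [show k + 1 = ((p : ℤ) + 1) + (k / n) * n by omega]
    exact equivar_mul hn g heq _ _
  have h3 := hwm p (by omega)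
  omega

lemma close_mod_eq {N : ℤ} (hN : 0 < N) {x : ℤ} (hx : x % N = 0) (hb1 : -N < x)
    (hb2 : x < N) : x = 0 := by
  obtain ⟨t, ht⟩ := Int.dvd_of_emod_eq_zero hx
  rcases lt_trichotomy t 0 with h | h | h
  · have h2 : N * t ≤ N * (-1) := mul_le_mul_of_nonneg_left (by omega) (by omega)
    exfalso
    rw [ht] at hb1
    linarith
  · rw [ht, h, mul_zero]
  · have h2 : N * 1 ≤ N * t := mul_le_mul_of_nonneg_left (by omega) (by omega)
    exfalso
    rw [ht] at hb2
    linarith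

lemma final_id [NeZero n] (hn : 3 ≤ n) (κ : ℝ) (hκ1 : 1 < κ)
    (hbig : 0 < ((n : ℝ) - 1) - ((n : ℝ) - 2) * κ)
    (v : ZMod n → ℝ) (g : ℤ → ℤ)
    (hS : ∑ x : ZMod n, v x = κ) (hInv : Inv n κ v g) (hpos : ∀ j, 0 ≤ v j) :
    v = fun x => if x = iota0 n then κ - (κ - 1) * ((n : ℝ) - 1) else κ - 1 := by
  have hn0 : 0 < n := by omega
  obtain ⟨hbij, heq, hdef, hwin⟩ := hInv
  have hwm : ∀ p : ℕ, p < n → g (p : ℤ) ≤ g ((p : ℤ) + 1) := by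
    intro p hp
    exact ascent_of_nonneg hn κ hκ1 hbig v g hS ⟨hbij, heq, hdef, hwin⟩ hp (hpos _)
  have hmonoall := mono_all hn0 g heq hwm
  have htrans := mono_bij_translation g hbij hmonoall
  set d : ℤ := g 0 with hddef
  -- defect gives value of d
  have hsum : ∑ k ∈ Finset.range n, (g (k : ℕ) - (k : ℤ)) = (n : ℤ) * d := by
    have hterm : ∀ k ∈ Finset.range n, g ((k : ℕ)) - ((k : ℕ) : ℤ) = d := by
      intro k _
      rw [htrans ((k : ℕ) : ℤ)]
      ring
    rw [Finset.sum_congr rfl hterm, Finset.sum_const, Finset.card_range, nsmul_eq_mul]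
  rw [hsum] at hdef
  have hdval : 2 * d = -(((n:ℤ) - 1) * ((n:ℤ) - 2)) := by
    have h : (n : ℤ) * (2 * d) = (n : ℤ) * (-(((n:ℤ) - 1) * ((n:ℤ) - 2))) := by
      linear_combination hdef
    exact mul_left_cancel₀ (by omega : (n : ℤ) ≠ 0) h
  -- compute v x
  funext x
  set p : ℕ := x.val with hpdef
  have hpn : p < n := ZMod.val_lt x
  have hx : (p : ZMod n) = x := ZMod.natCast_zmod_val x
  have hvx : v x = EE n κ ((p : ℤ) + d) - EE n κ (((p : ℤ) + d) + 1) := by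
    rcases Nat.lt_or_ge (p + 1) n with hpi | hpb
    · have h1 : bb n v (p + 1) = bb n v p - v ((p : ℕ) : ZMod n) := bb_succ v p
      rw [hwin (p + 1) hpi, hwin p (by omega), htrans ((p : ℕ)),
        htrans (((p + 1) : ℕ))] at h1
      rw [← hx]
      rw [show (((p + 1 : ℕ)) : ℤ) = (p : ℤ) + 1 by omega,
        show ((p:ℤ) + 1) + d = ((p:ℤ) + d) + 1 by ring] at h1
      linarith [h1]
    · have hpe : p = n - 1 := by omega
      have hv : v ((p : ℕ) : ZMod n) = κ + bb n v (n - 1) := by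
        rw [show ((p : ℕ) : ZMod n) = ((n - 1 : ℕ) : ZMod n) by rw [hpe], vlast hn v, hS]
      rw [← hx, hv, hwin (n - 1) (by omega), htrans (((n - 1) : ℕ))]
      have hEs : EE n κ (((p : ℤ) + d) + 1) = EE n κ d - κ := by
        rw [show ((p : ℤ) + d) + 1 = d + (n : ℤ) by omega]
        exact EE_shift hn0 κ d
      rw [hEs]
      rw [show (((n - 1 : ℕ)) : ℤ) + d = (p : ℤ) + d by omega]
      ring
  rw [hvx, EE_drop hn0 κ ((p : ℤ) + d)]
  -- identify the residue
  obtain ⟨N0, hN0def⟩ : ∃ N0 : ℕ, N0 = if Even n then n / 2 else 0 := ⟨_, rfl⟩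
  have hN0n : N0 < n := by
    rw [hN0def]
    split_ifs <;> omega
  have hparity : ((N0 : ℤ) + d + 1) % n = 0 := by
    by_cases he : Even n
    · obtain ⟨s, hs⟩ := he
      have hsval : N0 = s := by rw [hN0def, if_pos ⟨s, hs⟩]; omega
      have hceq : 2 * ((N0 : ℤ) + d + 1) = 2 * ((2 - (s:ℤ)) * n) := by
        have hns : (n : ℤ) = 2 * s := by omega
        rw [hsval]
        linear_combination hdval + (-(1 : ℤ) - n) * hns
      have hc2 : ((N0 : ℤ) + d + 1) = (2 - (s:ℤ)) * n :=
        mul_left_cancel₀ (by omega : (2:ℤ) ≠ 0) hceq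
      rw [hc2, Int.mul_emod_left]
    · have hodd : n % 2 = 1 := Nat.odd_iff.mp (Nat.not_even_iff_odd.mp he)
      have hN00 : N0 = 0 := by rw [hN0def, if_neg he]
      set t : ℕ := (n - 3) / 2 with htdef
      have hts : n - 3 = 2 * t := by omega
      have hceq : 2 * ((N0 : ℤ) + d + 1) = 2 * (-((t:ℤ)) * n) := by
        have h3 : ((n:ℤ) - 3) = 2 * t := by omega
        rw [hN00]
        push_cast
        linear_combination hdval + (-(n:ℤ)) * h3
      have hc2 : ((N0 : ℤ) + d + 1) = -((t:ℤ)) * n :=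
        mul_left_cancel₀ (by omega : (2:ℤ) ≠ 0) hceq
      rw [hc2, Int.mul_emod_left]
  have hcond : (((p : ℤ) + d + 1) % n = 0) ↔ x = iota0 n := by
    constructor
    · intro h
      have hdiff : ((p : ℤ) - (N0 : ℤ)) % n = 0 := by
        have := Int.sub_emod ((p : ℤ) + d + 1) ((N0 : ℤ) + d + 1) n
        rw [h, hparity] at this
        rw [show (p : ℤ) - (N0 : ℤ) = ((p : ℤ) + d + 1) - ((N0 : ℤ) + d + 1) by ring, this]
        norm_num
      have := close_mod_eq (by omega : 0 < (n:ℤ)) hdiff (by omega) (by omega)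
      have hpN : p = N0 := by omega
      rw [← hx, hpN]
      unfold iota0
      rw [hN0def]
      split_ifs <;> norm_num
    · intro h
      have hpN : p = N0 := by
        have : x = ((N0 : ℕ) : ZMod n) := by
          rw [h]
          unfold iota0
          rw [hN0def]
          split_ifs <;> norm_num
        rw [← hx] at this
        have h2 : ((p : ℕ) : ZMod n).val = ((N0 : ℕ) : ZMod n).val := by rw [this]
        rwa [ZMod.val_cast_of_lt hpn, ZMod.val_cast_of_lt hN0n] at h2
      rw [hpN]
      exact hparity
  by_cases hc : ((p : ℤ) + d + 1) % n = 0
  · rw [if_pos hc, if_pos (hcond.mp hc)]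
    push_cast
    ring
  · rw [if_neg hc, if_neg (fun hcc => hc (hcond.mpr hcc))]

end Final
section Assemble

variable {n : ℕ}

lemma play_preserve [NeZero n] (hn : 3 ≤ n) (κ : ℝ) :
    ∀ (l : List (ZMod n)) (v : ZMod n → ℝ) (g : ℤ → ℤ),
      (∑ x : ZMod n, v x = κ) → Inv n κ v g → IsPlay n 0 v l →
      (∑ x : ZMod n, playResult n v l x = κ) ∧ ∃ g', Inv n κ (playResult n v l) g' := by
  intro l
  induction l with
  | nil =>
    intro v g hS hI _
    exact ⟨hS, g, hI⟩
  | cons i l ih =>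
    intro v g hS hI hp
    obtain ⟨hneg, hp'⟩ := hp
    have h1 : playResult n v (i :: l) = playResult n (fire n i v) l := rfl
    rw [h1]
    exact ih (fire n i v) (fun k => g (tau n (ZMod.val i) k))
      (by rw [sum_fire hn]; exact hS) (Inv_fire hn κ v g hS hI i) hp'

lemma exists_play [NeZero n] (hn : 3 ≤ n) (κ : ℝ) (hκ1 : 1 < κ)
    (hbig : 0 < ((n : ℝ) - 1) - ((n : ℝ) - 2) * κ) :
    ∀ (N : ℕ) (v : ZMod n → ℝ) (g : ℤ → ℤ),
      (∑ x : ZMod n, v x = κ) → Inv n κ v g → mu n g ≤ N →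
      ∃ l, IsPlay n 0 v l ∧ ∀ j, 0 ≤ playResult n v l j := by
  intro N
  induction N with
  | zero =>
    intro v g hS hI hmu
    by_cases hp : ∀ j, 0 ≤ v j
    · exact ⟨[], trivial, hp⟩
    · exfalso
      push_neg at hp
      obtain ⟨x, hx⟩ := hp
      have hdec := mu_fire_dec hn κ hκ1 hbig v g hS hI x hx
      omega
  | succ N ih =>
    intro v g hS hI hmu
    by_cases hp : ∀ j, 0 ≤ v j
    · exact ⟨[], trivial, hp⟩
    · push_neg at hp
      obtain ⟨x, hx⟩ := hp
      have hdec := mu_fire_dec hn κ hκ1 hbig v g hS hI x hx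
      obtain ⟨l, hl1, hl2⟩ := ih (fire n x v) (fun k => g (tau n (ZMod.val x) k))
        (by rw [sum_fire hn]; exact hS) (Inv_fire hn κ v g hS hI x) (by omega)
      exact ⟨x :: l, ⟨hx, hl1⟩, hl2⟩

end Assemble

end NG

/-- For `1 < κ < 1 + 1/(n-2)`, some legal play from `u_κ` ends at a nonnegative
configuration, and every legal play from `u_κ` ending at a nonnegative configuration ends
at `(κ-1)·ρ^(ι0) + κ·e_{ι0}`. -/
theorem numbers_game_from_ukappa (n : ℕ) [NeZero n] (hn : 3 ≤ n)
    (κ : ℝ) (hκ1 : 1 < κ) (hκ2 : κ < 1 + 1 / ((n : ℝ) - 2)) :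
    (∃ p : List (ZMod n), IsPlay n 0 (ukappa n κ) p ∧
      ∀ j, 0 ≤ playResult n (ukappa n κ) p j) ∧
    (∀ p : List (ZMod n), IsPlay n 0 (ukappa n κ) p →
      (∀ j, 0 ≤ playResult n (ukappa n κ) p j) →
      playResult n (ukappa n κ) p =
        fun x => if x = iota0 n then κ - (κ - 1) * ((n : ℝ) - 1) else κ - 1) := by
  have hn3 : (3 : ℝ) ≤ (n : ℝ) := by exact_mod_cast hn
  have h2 : (0 : ℝ) < (n : ℝ) - 2 := by linarith
  have hbig : 0 < ((n : ℝ) - 1) - ((n : ℝ) - 2) * κ := by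
    have hb : κ * ((n : ℝ) - 2) < (1 + 1 / ((n : ℝ) - 2)) * ((n : ℝ) - 2) :=
      mul_lt_mul_of_pos_right hκ2 h2
    have he : (1 + 1 / ((n : ℝ) - 2)) * ((n : ℝ) - 2) = (n : ℝ) - 1 := by
      field_simp
      ring
    nlinarith
  have hS := NG.sum_ukappa (n := n) hn κ
  have hI := NG.Inv_init (n := n) hn κ
  constructor
  · exact NG.exists_play hn κ hκ1 hbig (NG.mu n (NG.g0 n)) (ukappa n κ) (NG.g0 n) hS hI le_rfl
  · intro p hplay hend
    obtain ⟨hS', g', hI'⟩ := NG.play_preserve hn κ p (ukappa n κ) (NG.g0 n) hS hI hplay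
    exact NG.final_id hn κ hκ1 hbig _ g' hS' hI' hend
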